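/- For every tree P and all nonnegative real numbers a_1,…,a_m, one has ∑_{(j_1,…,j_k) ∈ P} a_{j_1}⋯a_{j_k} ≥ inf_{p ≤ k ≤ q} ∑_{(j_1,…,j_k) ∈ L^k} a_{j_1}⋯a_{j_k}, where p = min{k : (j_1,…,j_k) ∈ P} is the length of the shortest branch of P and q = max{k : (j_1,…,j_k) ∈ P} is the length of the longest branch of P. -/

import Mathlib

open Filter Set

/-- The index set `L^k = N_1 × ⋯ × N_k`, realized as the finset of functions
`j : Fin k → Fin m` whose `i`-th component lies in `N (i+1)`. -/
def Lk {m : ℕ} (N : ℕ → Finset (Fin m)) (k : ℕ) : Finset (Fin k → Fin m) :=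
  Finset.univ.filter fun j => ∀ i : Fin k, j i ∈ N (i + 1)

/-- Two finite sequences agree on their common initial segment. -/
def AgreesWith {m : ℕ} (x y : (k : ℕ) × (Fin k → Fin m)) : Prop :=
  ∀ (q : ℕ) (hx : q < x.1) (hy : q < y.1), x.2 ⟨q, hx⟩ = y.2 ⟨q, hy⟩

/-- A finite set `P` of finite sequences (elements of `K = ⋃_k L^k`) is a tree if every
sequence `(j_1,…,j_k) ∈ K` agrees with some `(i_1,…,i_p) ∈ P` on the first `min {k,p}`
places, and moreover this element of `P` is unique among those with `p ≤ k`. -/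
def IsTree {m : ℕ} (N : ℕ → Finset (Fin m)) (P : Finset ((k : ℕ) × (Fin k → Fin m))) :
    Prop :=
  (∀ x ∈ P, 1 ≤ x.1 ∧ ∀ i : Fin x.1, x.2 i ∈ N (i + 1)) ∧
  ∀ k : ℕ, 1 ≤ k → ∀ j : Fin k → Fin m, (∀ i : Fin k, j i ∈ N (i + 1)) →
    (∃ y ∈ P, AgreesWith ⟨k, j⟩ y) ∧
    ∀ y ∈ P, y.1 ≤ k → AgreesWith ⟨k, j⟩ y →
      ∀ y' ∈ P, y'.1 ≤ k → AgreesWith ⟨k, j⟩ y' → y = y'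

lemma mem_Lk {m : ℕ} {N : ℕ → Finset (Fin m)} {k : ℕ} {j : Fin k → Fin m} :
    j ∈ Lk N k ↔ ∀ i : Fin k, j i ∈ N (i + 1) := by
  simp [Lk]

lemma Lk_eq_piFinset {m : ℕ} (N : ℕ → Finset (Fin m)) (k : ℕ) :
    Lk N k = Fintype.piFinset (fun i : Fin k => N (i + 1)) := by
  ext j; simp [Lk]

lemma sum_piFinset {m : ℕ} (k : ℕ) (t : Fin k → Finset (Fin m)) (a : Fin m → ℝ) :
    ∑ j ∈ Fintype.piFinset t, ∏ i, a (j i) = ∏ i, ∑ n ∈ t i, a n :=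
  (Finset.prod_univ_sum t fun _ n => a n).symm

noncomputable def cS {m : ℕ} (N : ℕ → Finset (Fin m)) (a : Fin m → ℝ) (n : ℕ) : ℝ :=
  ∑ j ∈ N n, a j

noncomputable def DP {m : ℕ} (N : ℕ → Finset (Fin m)) (a : Fin m → ℝ) (k : ℕ) : ℝ :=
  ∏ n ∈ Finset.range k, cS N a (n + 1)

lemma sum_Lk {m : ℕ} (N : ℕ → Finset (Fin m)) (a : Fin m → ℝ) (k : ℕ) :
    ∑ j ∈ Lk N k, ∏ i, a (j i) = DP N a k := by
  rw [Lk_eq_piFinset, sum_piFinset, DP]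
  exact Fin.prod_univ_eq_prod_range (fun n => cS N a (n + 1)) k


/-- For any tree `P` and nonnegative numbers `a_1,…,a_m`:
`∑_{(j_1,…,j_k) ∈ P} a_{j_1}⋯a_{j_k} ≥ inf_{p ≤ k ≤ q} ∑_{(j_1,…,j_k) ∈ L^k} a_{j_1}⋯a_{j_k}`,
where `p` (resp. `q`) is the length of the shortest (resp. longest) branch of `P`. -/
theorem stmt3 {m : ℕ} (N : ℕ → Finset (Fin m)) (hN : ∀ k, 1 ≤ k → (N k).Nonempty)
    (P : Finset ((k : ℕ) × (Fin k → Fin m))) (hP : IsTree N P) (hPne : P.Nonempty)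
    (a : Fin m → ℝ) (ha : ∀ j, 0 ≤ a j) :
    (Finset.Icc (P.inf' hPne fun x => x.1) (P.sup' hPne fun x => x.1)).inf'
        (Finset.nonempty_Icc.mpr (by
          obtain ⟨x, hx⟩ := hPne
          exact le_trans (Finset.inf'_le _ hx) (Finset.le_sup' _ hx)))
        (fun k => ∑ j ∈ Lk N k, ∏ i, a (j i)) ≤
      ∑ x ∈ P, ∏ i, a (x.2 i) := by
  classical
  set p := P.inf' hPne fun x => x.1 with hpdef
  set q := P.sup' hPne fun x => x.1 with hqdef
  have hxq : ∀ x ∈ P, x.1 ≤ q := fun x hx => Finset.le_sup' (fun x => x.1) hx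
  have hpx : ∀ x ∈ P, p ≤ x.1 := fun x hx => Finset.inf'_le (fun x => x.1) hx
  have hq1 : 1 ≤ q := by
    obtain ⟨x, hx⟩ := hPne
    exact le_trans (hP.1 x hx).1 (hxq x hx)
  have hcnn : ∀ n, 0 ≤ cS N a n := fun n => Finset.sum_nonneg fun j _ => ha j
  have hDnn : ∀ k, 0 ≤ DP N a k := fun k => Finset.prod_nonneg fun n _ => hcnn _
  have hwnn : ∀ x : (k : ℕ) × (Fin k → Fin m), 0 ≤ ∏ i, a (x.2 i) :=
    fun x => Finset.prod_nonneg fun i _ => ha _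
  -- the selection function
  have hex : ∀ j : Fin q → Fin m,
      ∃ y, y ∈ P ∧ (j ∈ Lk N q → AgreesWith ⟨q, j⟩ y) := by
    intro j
    by_cases hj : j ∈ Lk N q
    · obtain ⟨y, hy, hag⟩ := (hP.2 q hq1 j (mem_Lk.mp hj)).1
      exact ⟨y, hy, fun _ => hag⟩
    · exact ⟨hPne.choose, hPne.choose_spec, fun h => absurd h hj⟩
  choose g hgP hgA using hex
  have huniq : ∀ j ∈ Lk N q, ∀ x ∈ P, AgreesWith ⟨q, j⟩ x → g j = x := by
    intro j hj x hx hA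
    exact (hP.2 q hq1 j (mem_Lk.mp hj)).2 (g j) (hgP j) (hxq _ (hgP j)) (hgA j hj)
      x hx (hxq x hx) hA
  -- the fibers
  have hExt : ∀ x ∈ P, (Lk N q).filter (fun j => g j = x) =
      Fintype.piFinset (fun i : Fin q =>
        if h : (i : ℕ) < x.1 then {x.2 ⟨i, h⟩} else N ((i : ℕ) + 1)) := by
    intro x hx
    ext j
    rw [Finset.mem_filter, Fintype.mem_piFinset]
    constructor
    · rintro ⟨hjLk, hgj⟩
      intro i
      by_cases h : (i : ℕ) < x.1
      · rw [dif_pos h, Finset.mem_singleton]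
        have hA : AgreesWith ⟨q, j⟩ x := hgj ▸ hgA j hjLk
        have := hA i i.isLt h
        simpa using this
      · rw [dif_neg h]
        exact mem_Lk.mp hjLk i
    · intro hjpi
      have hjN : ∀ i : Fin q, j i ∈ N ((i : ℕ) + 1) := by
        intro i
        have := hjpi i
        by_cases h : (i : ℕ) < x.1
        · rw [dif_pos h, Finset.mem_singleton] at this
          rw [this]
          exact (hP.1 x hx).2 ⟨i, h⟩
        · rwa [dif_neg h] at this
      have hjLk : j ∈ Lk N q := mem_Lk.mpr hjN
      have hA : AgreesWith ⟨q, j⟩ x := by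
        intro q0 hq0 hq0'
        have := hjpi ⟨q0, hq0⟩
        rw [dif_pos hq0', Finset.mem_singleton] at this
        simpa using this
      exact ⟨hjLk, huniq j hjLk x hx hA⟩
  -- fiber sums
  have hfib : ∀ x ∈ P, ∑ j ∈ (Lk N q).filter (fun j => g j = x), ∏ i, a (j i)
      = (∏ i, a (x.2 i)) * ∏ n ∈ Finset.Ico x.1 q, cS N a (n + 1) := by
    intro x hx
    rw [hExt x hx, sum_piFinset]
    have h1 : ∀ i : Fin q,
        (∑ n ∈ (if h : (i : ℕ) < x.1 then {x.2 ⟨i, h⟩} else N ((i : ℕ) + 1)), a n)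
        = (fun n : ℕ => if h : n < x.1 then a (x.2 ⟨n, h⟩) else cS N a (n + 1)) (i : ℕ) := by
      intro i
      by_cases h : (i : ℕ) < x.1 <;> simp [h, cS]
    rw [Finset.prod_congr rfl (fun i _ => h1 i),
      Fin.prod_univ_eq_prod_range (fun n : ℕ => if h : n < x.1 then a (x.2 ⟨n, h⟩) else cS N a (n + 1)) q,
      Finset.range_eq_Ico, ← Finset.prod_Ico_consecutive _ (Nat.zero_le x.1) (hxq x hx)]
    congr 1
    · rw [← Finset.range_eq_Ico,
        ← Fin.prod_univ_eq_prod_range (fun n : ℕ => if h : n < x.1 then a (x.2 ⟨n, h⟩) else cS N a (n + 1)) x.1]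
      apply Finset.prod_congr rfl
      intro i _
      rw [dif_pos i.isLt]
    · apply Finset.prod_congr rfl
      intro n hn
      rw [dif_neg (by simpa using not_lt.mpr (Finset.mem_Ico.mp hn).1)]
  -- key identity
  have key : ∑ x ∈ P, (∏ i, a (x.2 i)) * ∏ n ∈ Finset.Ico x.1 q, cS N a (n + 1)
      = DP N a q := by
    rw [← sum_Lk N a q]
    rw [← Finset.sum_fiberwise_of_maps_to (fun j hj => hgP j) (fun j => ∏ i, a (j i))]
    exact Finset.sum_congr rfl fun x hx => (hfib x hx).symm
  have hDsplit : ∀ x ∈ P, DP N a x.1 * ∏ n ∈ Finset.Ico x.1 q, cS N a (n + 1) = DP N a q := by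
    intro x hx
    rw [DP, DP, Finset.range_eq_Ico, Finset.range_eq_Ico]
    exact Finset.prod_Ico_consecutive _ (Nat.zero_le x.1) (hxq x hx)
  -- pick the argmin
  obtain ⟨k0, hk0mem, hk0eq⟩ := Finset.exists_mem_eq_inf'
    (Finset.nonempty_Icc.mpr (le_trans (hpx _ hPne.choose_spec) (hxq _ hPne.choose_spec)))
    (fun k => ∑ j ∈ Lk N k, ∏ i, a (j i))
  rw [hk0eq, sum_Lk]
  have hmin : ∀ k ∈ Finset.Icc p q, DP N a k0 ≤ DP N a k := by
    intro k hk
    rw [← sum_Lk, ← sum_Lk, ← hk0eq]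
    exact Finset.inf'_le _ hk
  have hqmem : q ∈ Finset.Icc p q :=
    Finset.mem_Icc.mpr ⟨le_trans (hpx _ hPne.choose_spec) (hxq _ hPne.choose_spec), le_refl q⟩
  by_cases hDq : 0 < DP N a q
  · -- positive case
    have hterm : ∀ x ∈ P,
        (∏ i, a (x.2 i)) * (∏ n ∈ Finset.Ico x.1 q, cS N a (n + 1)) * (DP N a k0 / DP N a q)
          ≤ ∏ i, a (x.2 i) := by
      intro x hx
      have hTnn : 0 ≤ ∏ n ∈ Finset.Ico x.1 q, cS N a (n + 1) :=
        Finset.prod_nonneg fun n _ => hcnn _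
      have hle : (∏ n ∈ Finset.Ico x.1 q, cS N a (n + 1)) * DP N a k0 ≤ DP N a q := by
        calc (∏ n ∈ Finset.Ico x.1 q, cS N a (n + 1)) * DP N a k0
            ≤ (∏ n ∈ Finset.Ico x.1 q, cS N a (n + 1)) * DP N a x.1 :=
              mul_le_mul_of_nonneg_left
                (hmin x.1 (Finset.mem_Icc.mpr ⟨hpx x hx, hxq x hx⟩)) hTnn
          _ = DP N a q := by rw [mul_comm]; exact hDsplit x hx
      have h1 : (∏ n ∈ Finset.Ico x.1 q, cS N a (n + 1)) * DP N a k0 / DP N a q ≤ 1 :=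
        (div_le_one hDq).mpr hle
      calc (∏ i, a (x.2 i)) * (∏ n ∈ Finset.Ico x.1 q, cS N a (n + 1)) * (DP N a k0 / DP N a q)
          = (∏ i, a (x.2 i)) * ((∏ n ∈ Finset.Ico x.1 q, cS N a (n + 1)) * DP N a k0 / DP N a q) := by
            ring
        _ ≤ (∏ i, a (x.2 i)) * 1 := mul_le_mul_of_nonneg_left h1 (hwnn x)
        _ = ∏ i, a (x.2 i) := mul_one _
    calc DP N a k0 = DP N a q * (DP N a k0 / DP N a q) := by
          field_simp
      _ = (∑ x ∈ P, (∏ i, a (x.2 i)) * ∏ n ∈ Finset.Ico x.1 q, cS N a (n + 1))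
            * (DP N a k0 / DP N a q) := by rw [key]
      _ = ∑ x ∈ P, (∏ i, a (x.2 i)) * (∏ n ∈ Finset.Ico x.1 q, cS N a (n + 1))
            * (DP N a k0 / DP N a q) := by rw [Finset.sum_mul]
      _ ≤ ∑ x ∈ P, ∏ i, a (x.2 i) := Finset.sum_le_sum hterm
  · -- DP N a q = 0
    have hDq0 : DP N a q = 0 := le_antisymm (not_lt.mp hDq) (hDnn q)
    calc DP N a k0 ≤ DP N a q := hmin q hqmem
      _ = 0 := hDq0
      _ ≤ ∑ x ∈ P, ∏ i, a (x.2 i) := Finset.sum_nonneg fun x _ => hwnn x
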